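/- For a rooted tree G=(V,E), the set { γ ∈ [0,1]^V : ∑_{v'∈Ā(v)} γ_{v'} ≤ 1 for all v ∈ V } equals the set of vectors γ of the form γ_v = κ_v · ∏_{v'∈A(v)} (1 − κ_{v'}) for some κ ∈ [0,1]^V. -/

import Mathlib

open Finset

def ancestors {n : ℕ} [NeZero n] (par : Fin n → Fin n) (hpar : ∀ v, v ≠ 0 → par v < v) :
    Fin n → Finset (Fin n) :=
  fun v =>
    if h : v = 0 then ∅ else insert (par v) (ancestors par hpar (par v))
termination_by v => (v : ℕ)
decreasing_by exact hpar _ h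

/-- `v` together with its strict ancestors. -/
def barA {n : ℕ} [NeZero n] (par : Fin n → Fin n) (hpar : ∀ v, v ≠ 0 → par v < v)
    (v : Fin n) : Finset (Fin n) :=
  insert v (ancestors par hpar v)

/-- `v` together with its descendants. -/
def barD {n : ℕ} [NeZero n] (par : Fin n → Fin n) (hpar : ∀ v, v ≠ 0 → par v < v)
    (v : Fin n) : Finset (Fin n) :=
  Finset.univ.filter (fun w => v ∈ barA par hpar w)

/-- strict descendants of `v`. -/
def strictD {n : ℕ} [NeZero n] (par : Fin n → Fin n) (hpar : ∀ v, v ≠ 0 → par v < v)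
    (v : Fin n) : Finset (Fin n) :=
  Finset.univ.filter (fun w => v ∈ ancestors par hpar w)

/-- children of `v`. -/
def children {n : ℕ} [NeZero n] (par : Fin n → Fin n) (v : Fin n) : Finset (Fin n) :=
  Finset.univ.filter (fun w => w ≠ 0 ∧ par w = v)

lemma ancestors_zero {n : ℕ} [NeZero n] (par : Fin n → Fin n) (hpar : ∀ v, v ≠ 0 → par v < v) :
    ancestors par hpar 0 = ∅ := by rw [ancestors]; simp

lemma ancestors_ne {n : ℕ} [NeZero n] (par : Fin n → Fin n) (hpar : ∀ v, v ≠ 0 → par v < v)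
    {v : Fin n} (h : v ≠ 0) : ancestors par hpar v = barA par hpar (par v) := by
  rw [ancestors]; simp [h]; rfl

lemma ancestors_lt {n : ℕ} [NeZero n] (par : Fin n → Fin n) (hpar : ∀ v, v ≠ 0 → par v < v)
    (v w : Fin n) (hw : w ∈ ancestors par hpar v) : w < v := by
  rw [ancestors] at hw
  by_cases h : v = 0
  · simp [h] at hw
  · rw [dif_neg h, mem_insert] at hw
    rcases hw with rfl | hw
    · exact hpar v h
    · exact lt_trans (ancestors_lt par hpar (par v) w hw) (hpar v h)
termination_by (v : ℕ)
decreasing_by exact hpar v h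

lemma not_mem_ancestors {n : ℕ} [NeZero n] (par : Fin n → Fin n)
    (hpar : ∀ v, v ≠ 0 → par v < v) (v : Fin n) : v ∉ ancestors par hpar v :=
  fun h => lt_irrefl v (ancestors_lt par hpar v v h)

lemma sum_barA_eq {n : ℕ} [NeZero n] (par : Fin n → Fin n) (hpar : ∀ v, v ≠ 0 → par v < v)
    (κ : Fin n → ℝ) (v : Fin n) :
    ∑ w ∈ barA par hpar v, κ w * ∏ u ∈ ancestors par hpar w, (1 - κ u)
      = 1 - ∏ w ∈ barA par hpar v, (1 - κ w) := by
  rw [barA, sum_insert (not_mem_ancestors par hpar v),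
    prod_insert (not_mem_ancestors par hpar v)]
  by_cases h : v = 0
  · subst h; rw [ancestors_zero]; simp
  · rw [ancestors_ne par hpar h, sum_barA_eq par hpar κ (par v)]
    ring
termination_by (v : ℕ)
decreasing_by exact hpar v h


section Main
variable {n : ℕ} [NeZero n] (par : Fin n → Fin n) (hpar : ∀ v, v ≠ 0 → par v < v)
  (γ : Fin n → ℝ)

noncomputable def kap : Fin n → ℝ := fun v =>
  if 0 < 1 - ∑ u ∈ ancestors par hpar v, γ u
  then γ v / (1 - ∑ u ∈ ancestors par hpar v, γ u) else 0

lemma prod_barA_eq (hb : ∀ v, 0 ≤ γ v ∧ γ v ≤ 1)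
    (hs : ∀ v, ∑ v' ∈ barA par hpar v, γ v' ≤ 1) (v : Fin n) :
    ∏ w ∈ barA par hpar v, (1 - kap par hpar γ w) = 1 - ∑ w ∈ barA par hpar v, γ w := by
  rw [barA, sum_insert (not_mem_ancestors par hpar v),
    prod_insert (not_mem_ancestors par hpar v)]
  by_cases h : v = 0
  · subst h
    rw [ancestors_zero]
    simp [kap, ancestors_zero]
  · rw [ancestors_ne par hpar h, prod_barA_eq hb hs (par v)]
    rw [← ancestors_ne par hpar h]
    set S := ∑ u ∈ ancestors par hpar v, γ u with hS
    have hcon : γ v + S ≤ 1 := by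
      have := hs v
      rwa [barA, sum_insert (not_mem_ancestors par hpar v)] at this
    by_cases hpos : 0 < 1 - S
    · rw [kap, if_pos hpos, ← hS]
      have hne : (1:ℝ) - S ≠ 0 := ne_of_gt hpos
      field_simp
      ring
    · rw [kap, if_neg hpos]
      have h1 : γ v = 0 := le_antisymm (by linarith) (hb v).1
      have h2 : (1:ℝ) - S ≤ 0 := by linarith
      have h3 : (0:ℝ) ≤ 1 - S := by
        have : S + γ v ≤ 1 := by linarith
        linarith [(hb v).1]
      have : (1:ℝ) - S = 0 := le_antisymm h2 h3
      rw [h1]; nlinarith [this]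
termination_by (v : ℕ)
decreasing_by exact hpar v h

end Main

theorem polytope_eq_product_form {n : ℕ} [NeZero n] (par : Fin n → Fin n)
    (hpar : ∀ v, v ≠ 0 → par v < v) :
    {γ : Fin n → ℝ | (∀ v, 0 ≤ γ v ∧ γ v ≤ 1) ∧
        ∀ v, ∑ v' ∈ barA par hpar v, γ v' ≤ 1} =
    {γ : Fin n → ℝ | ∃ κ : Fin n → ℝ, (∀ v, 0 ≤ κ v ∧ κ v ≤ 1) ∧
        ∀ v, γ v = κ v * ∏ v' ∈ ancestors par hpar v, (1 - κ v')} := by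
  ext γ
  simp only [Set.mem_setOf_eq]
  constructor
  · rintro ⟨hb, hs⟩
    refine ⟨kap par hpar γ, ?_, ?_⟩
    · intro v
      rw [kap]
      split_ifs with hpos
      · constructor
        · exact div_nonneg (hb v).1 (le_of_lt hpos)
        · rw [div_le_one hpos]
          have := hs v
          rw [barA, sum_insert (not_mem_ancestors par hpar v)] at this
          linarith
      · exact ⟨le_refl 0, zero_le_one⟩
    · intro v
      by_cases h : v = 0
      · subst h
        rw [ancestors_zero]
        simp [kap, ancestors_zero]
      · rw [ancestors_ne par hpar h, prod_barA_eq par hpar γ hb hs (par v),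
          ← ancestors_ne par hpar h]
        set S := ∑ u ∈ ancestors par hpar v, γ u with hS
        by_cases hpos : 0 < 1 - S
        · rw [kap, if_pos hpos, ← hS]
          have hne : (1:ℝ) - S ≠ 0 := ne_of_gt hpos
          field_simp
        · rw [kap, if_neg hpos]
          have hcon : γ v + S ≤ 1 := by
            have := hs v
            rwa [barA, sum_insert (not_mem_ancestors par hpar v)] at this
          have h1 : γ v = 0 := le_antisymm (by linarith) (hb v).1
          rw [h1]; ring
  · rintro ⟨κ, hκ, hγ⟩
    have hprod_mem : ∀ s : Finset (Fin n), 0 ≤ ∏ w ∈ s, (1 - κ w) ∧ ∏ w ∈ s, (1 - κ w) ≤ 1 := by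
      intro s
      constructor
      · exact prod_nonneg (fun w _ => by linarith [(hκ w).2])
      · exact prod_le_one (fun w _ => by linarith [(hκ w).2]) (fun w _ => by linarith [(hκ w).1])
    constructor
    · intro v
      rw [hγ v]
      obtain ⟨hp0, hp1⟩ := hprod_mem (ancestors par hpar v)
      constructor
      · exact mul_nonneg (hκ v).1 hp0
      · exact mul_le_one₀ (hκ v).2 hp0 hp1
    · intro v
      have : ∑ v' ∈ barA par hpar v, γ v'
          = ∑ w ∈ barA par hpar v, κ w * ∏ u ∈ ancestors par hpar w, (1 - κ u) :=
        Finset.sum_congr rfl (fun w _ => hγ w)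
      rw [this, sum_barA_eq par hpar κ v]
      linarith [(hprod_mem (barA par hpar v)).1]
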